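/- arXiv:2102.07163 — 3 statements merged into one kernel-verified Lean document; each statement's English description precedes it below -/
import Mathlib

section
/- Suppose v_n ∈ H¹(ℝ³) satisfy ‖v_n‖_{L²} = ‖Q‖_{L²}, E_V(v_n) = E₀(Q), and ‖v_n‖²_{Ḣ¹_V} := ∫|∇v_n|² + V|v_n|² → ‖∇Q‖²_{L²}, where V ≥ 0. Then ‖v_n‖_{L⁴} → ‖Q‖_{L⁴}, ‖∇v_n‖_{L²} → ‖∇Q‖_{L²}, and ∫ V|v_n|² dx → 0. Consequently v_n is an optimizing sequence for the sharp Gagliardo–Nirenberg inequality with V = 0. -/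
open MeasureTheory Real Filter
noncomputable section

abbrev R3 : Type := EuclideanSpace ℝ (Fin 3)

/-- The `i`-th standard basis vector of `ℝ³`. -/
def e3 (i : Fin 3) : R3 := EuclideanSpace.single i 1

/-- Partial derivative of a complex-valued function. -/
def pd (f : R3 → ℂ) (i : Fin 3) (x : R3) : ℂ := fderiv ℝ f x (e3 i)

/-- Partial derivative of a real-valued function. -/
def pdR (f : R3 → ℝ) (i : Fin 3) (x : R3) : ℝ := fderiv ℝ f x (e3 i)

/-- Laplacian of a real-valued function. -/
def lapR (f : R3 → ℝ) (x : R3) : ℝ := ∑ i, fderiv ℝ (fun y => pdR f i y) x (e3 i)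

/-- Second partial derivative ∂ⱼ∂ₖ of a real-valued function. -/
def d2R (w : R3 → ℝ) (j k : Fin 3) (x : R3) : ℝ := fderiv ℝ (fun y => pdR w k y) x (e3 j)

/-- |∇f|² for a complex-valued function. -/
def gradSq (f : R3 → ℂ) (x : R3) : ℝ := ∑ i, ‖pd f i x‖^2

/-- |∇f|² for a real-valued function. -/
def gradSqR (f : R3 → ℝ) (x : R3) : ℝ := ∑ i, (pdR f i x)^2

/-- if `v_n ∈ H¹` have `‖v_n‖₂ = ‖Q‖₂`, `E_V(v_n) = E₀(Q)` and
`‖v_n‖²_{Ḣ¹_V} → ‖∇Q‖₂²` with `V ≥ 0`, then `‖v_n‖₄ → ‖Q‖₄`, `‖∇v_n‖₂ → ‖∇Q‖₂`,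
and `∫V|v_n|² → 0`; i.e. `v_n` is an optimizing sequence for sharp
Gagliardo–Nirenberg with `V = 0`. -/
theorem stmt8 (Q V : R3 → ℝ) (v : ℕ → R3 → ℂ) (C₀ : ℝ)
    (hVpos : ∀ x, 0 ≤ V x)
    (hQ2 : Integrable fun x => (Q x)^2)
    (hQ4 : Integrable fun x => (Q x)^4)
    (hQgrad : Integrable fun x => gradSqR Q x)
    (hQ2pos : 0 < ∫ x : R3, (Q x)^2)
    (hQ4pos : 0 < ∫ x : R3, (Q x)^4)
    (hQgradpos : 0 < ∫ x : R3, gradSqR Q x)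
    (hC0 : (∫ x : R3, (Q x)^4)
      = C₀ * Real.sqrt (∫ x : R3, (Q x)^2) * (∫ x : R3, gradSqR Q x) ^ ((3:ℝ)/2))
    (hdiff : ∀ n, Differentiable ℝ (v n))
    (hv2 : ∀ n, Integrable fun x => ‖v n x‖^2)
    (hv4 : ∀ n, Integrable fun x => ‖v n x‖^4)
    (hvgrad : ∀ n, Integrable fun x => gradSq (v n) x)
    (hvV : ∀ n, Integrable fun x => V x * ‖v n x‖^2)
    (hmass : ∀ n, (∫ x : R3, ‖v n x‖^2) = ∫ x : R3, (Q x)^2)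
    (henergy : ∀ n, (1/2) * ((∫ x : R3, gradSq (v n) x) + (∫ x : R3, V x * ‖v n x‖^2))
        - (1/4) * (∫ x : R3, ‖v n x‖^4)
      = (1/2) * (∫ x : R3, gradSqR Q x) - (1/4) * (∫ x : R3, (Q x)^4))
    (hGN : ∀ n, (∫ x : R3, ‖v n x‖^4)
      ≤ C₀ * Real.sqrt (∫ x : R3, ‖v n x‖^2) * (∫ x : R3, gradSq (v n) x) ^ ((3:ℝ)/2))
    (hH1V : Tendsto (fun n => (∫ x : R3, gradSq (v n) x) + (∫ x : R3, V x * ‖v n x‖^2))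
      atTop (nhds (∫ x : R3, gradSqR Q x))) :
    Tendsto (fun n => ∫ x : R3, ‖v n x‖^4) atTop (nhds (∫ x : R3, (Q x)^4))
    ∧ Tendsto (fun n => ∫ x : R3, gradSq (v n) x) atTop (nhds (∫ x : R3, gradSqR Q x))
    ∧ Tendsto (fun n => ∫ x : R3, V x * ‖v n x‖^2) atTop (nhds 0) := by

  set M := ∫ x : R3, (Q x)^2 with hMdef
  set G := ∫ x : R3, gradSqR Q x with hGdef
  set FQ := ∫ x : R3, (Q x)^4 with hFQdef
  set a := fun n => ∫ x : R3, gradSq (v n) x with hadef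
  set b := fun n => ∫ x : R3, V x * ‖v n x‖^2 with hbdef
  set F := fun n => ∫ x : R3, ‖v n x‖^4 with hFdef
  have ha0 : ∀ n, 0 ≤ a n := by
    intro n
    apply integral_nonneg
    intro x
    exact Finset.sum_nonneg fun i _ => pow_nonneg (norm_nonneg _) 2
  have hb0 : ∀ n, 0 ≤ b n := by
    intro n
    apply integral_nonneg
    intro x
    exact mul_nonneg (hVpos x) (pow_nonneg (norm_nonneg _) 2)
  have hF0 : ∀ n, 0 ≤ F n := by
    intro n
    apply integral_nonneg
    intro x
    exact pow_nonneg (norm_nonneg _) 4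
  have hsqrtM : 0 < Real.sqrt M := Real.sqrt_pos.2 hQ2pos
  have hG32 : (0:ℝ) < G ^ ((3:ℝ)/2) := Real.rpow_pos_of_pos hQgradpos _
  have hC0pos : 0 < C₀ := by
    have hP : 0 < Real.sqrt M * G ^ ((3:ℝ)/2) := mul_pos hsqrtM hG32
    nlinarith [hQ4pos, hC0]
  have hD : 0 < C₀ * Real.sqrt M := mul_pos hC0pos hsqrtM
  -- F n in terms of a n + b n
  have hFeq : ∀ n, F n = FQ + 2 * ((a n + b n) - G) := by
    intro n
    have := henergy n
    simp only [hadef, hbdef, hFdef, hGdef, hFQdef] at this ⊢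
    linarith
  have hFt : Tendsto F atTop (nhds FQ) := by
    have h1 : Tendsto (fun n => FQ + 2 * ((a n + b n) - G)) atTop (nhds (FQ + 2 * (G - G))) := by
      exact (((hH1V.sub_const G).const_mul 2).const_add FQ)
    simp only [sub_self, mul_zero, add_zero] at h1
    exact h1.congr fun n => (hFeq n).symm
  -- lower bound for a n
  have hlow : ∀ n, (F n / (C₀ * Real.sqrt M)) ^ ((2:ℝ)/3) ≤ a n := by
    intro n
    have hgn := hGN n
    rw [hmass n] at hgn
    have h1 : F n / (C₀ * Real.sqrt M) ≤ (a n) ^ ((3:ℝ)/2) := by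
      rw [div_le_iff₀ hD]
      calc F n ≤ C₀ * Real.sqrt M * (a n) ^ ((3:ℝ)/2) := by
            simpa [mul_assoc] using hgn
        _ = (a n) ^ ((3:ℝ)/2) * (C₀ * Real.sqrt M) := by ring
    have h2 : (F n / (C₀ * Real.sqrt M)) ^ ((2:ℝ)/3) ≤ ((a n) ^ ((3:ℝ)/2)) ^ ((2:ℝ)/3) :=
      Real.rpow_le_rpow (div_nonneg (hF0 n) hD.le) h1 (by norm_num)
    calc (F n / (C₀ * Real.sqrt M)) ^ ((2:ℝ)/3) ≤ ((a n) ^ ((3:ℝ)/2)) ^ ((2:ℝ)/3) := h2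
      _ = a n := by
          rw [← Real.rpow_mul (ha0 n)]
          norm_num
  -- the lower bound tends to G
  have hlim : (FQ / (C₀ * Real.sqrt M)) ^ ((2:ℝ)/3) = G := by
    have hq : FQ / (C₀ * Real.sqrt M) = G ^ ((3:ℝ)/2) := by
      rw [hC0]; field_simp
    rw [hq, ← Real.rpow_mul hQgradpos.le]
    norm_num
  have hlt : Tendsto (fun n => (F n / (C₀ * Real.sqrt M)) ^ ((2:ℝ)/3)) atTop (nhds G) := by
    rw [← hlim]
    exact (hFt.div_const _).rpow_const (Or.inr (by norm_num))
  -- upper bound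
  have hub : ∀ n, a n ≤ a n + b n := fun n => le_add_of_nonneg_right (hb0 n)
  have hat : Tendsto a atTop (nhds G) :=
    tendsto_of_tendsto_of_tendsto_of_le_of_le hlt hH1V hlow hub
  have hbt : Tendsto b atTop (nhds 0) := by
    have h1 : Tendsto (fun n => (a n + b n) - a n) atTop (nhds (G - G)) := hH1V.sub hat
    simp only [sub_self, add_sub_cancel_left] at h1
    exact h1
  refine ⟨hFt, hat, hbt⟩
end
end

section
/- Let V ≥ 0 with equality in the sharp Gagliardo–Nirenberg inequality ‖f‖_{L⁴}⁴ ≤ C₀‖f‖_{L²}(∫|∇f|² + V|f|²)^{3/2} never attained for nonzero f (C₀ the free sharp constant). If u₀ ∈ H¹(ℝ³) satisfies M(u₀) = M(Q), E_V(u₀) = E₀(Q), and ‖u₀‖_{Ḣ¹_V} < ‖∇Q‖_{L²}, and u : I → H¹ is a continuous curve with conserved mass and energy (M(u(t)) = M(u₀), E_V(u(t)) = E_V(u₀)) with u(t₀) = u₀, then ‖u(t)‖_{Ḣ¹_V} < ‖∇Q‖_{L²} for all t ∈ I. -/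
open MeasureTheory Real Filter
noncomputable section

/-- non-attainment of equality in the sharp Gagliardo–Nirenberg
inequality with potential, together with conservation of mass and energy and
continuity of the flow, propagates the bound `‖u(t)‖_{Ḣ¹_V} < ‖∇Q‖_{L²}` from the
initial time to the whole interval. -/
theorem stmt9 (Q V : R3 → ℝ) (u : ℝ → R3 → ℂ) (I : Set ℝ) (t₀ : ℝ) (C₀ : ℝ)
    (hVpos : ∀ x, 0 ≤ V x)
    (hI : IsPreconnected I) (ht₀ : t₀ ∈ I)
    (hQ2pos : 0 < ∫ x : R3, (Q x)^2)
    (hC0 : (∫ x : R3, (Q x)^4)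
      = C₀ * Real.sqrt (∫ x : R3, (Q x)^2) * (∫ x : R3, gradSqR Q x) ^ ((3:ℝ)/2))
    (hudiff : ∀ t ∈ I, Differentiable ℝ (u t))
    (hu2 : ∀ t ∈ I, Integrable fun x => ‖u t x‖^2)
    (hu4 : ∀ t ∈ I, Integrable fun x => ‖u t x‖^4)
    (hugrad : ∀ t ∈ I, Integrable fun x => gradSq (u t) x)
    (huV : ∀ t ∈ I, Integrable fun x => V x * ‖u t x‖^2)
    (hN : ContinuousOn
      (fun t => (∫ x : R3, gradSq (u t) x) + (∫ x : R3, V x * ‖u t x‖^2)) I)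
    (hmass : ∀ t ∈ I, (∫ x : R3, ‖u t x‖^2) = ∫ x : R3, (Q x)^2)
    (henergy : ∀ t ∈ I,
      (1/2) * ((∫ x : R3, gradSq (u t) x) + (∫ x : R3, V x * ‖u t x‖^2))
        - (1/4) * (∫ x : R3, ‖u t x‖^4)
      = (1/2) * (∫ x : R3, gradSqR Q x) - (1/4) * (∫ x : R3, (Q x)^4))
    (hnever : ∀ f : R3 → ℂ, Differentiable ℝ f →
      (Integrable fun x => ‖f x‖^2) → (Integrable fun x => ‖f x‖^4) →
      (Integrable fun x => gradSq f x) → (Integrable fun x => V x * ‖f x‖^2) →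
      (∫ x : R3, ‖f x‖^2) ≠ 0 →
      (∫ x : R3, ‖f x‖^4) ≠ C₀ * Real.sqrt (∫ x : R3, ‖f x‖^2)
        * ((∫ x : R3, gradSq f x) + (∫ x : R3, V x * ‖f x‖^2)) ^ ((3:ℝ)/2))
    (hstart : (∫ x : R3, gradSq (u t₀) x) + (∫ x : R3, V x * ‖u t₀ x‖^2)
      < ∫ x : R3, gradSqR Q x) :
    ∀ t ∈ I, (∫ x : R3, gradSq (u t) x) + (∫ x : R3, V x * ‖u t x‖^2)
      < ∫ x : R3, gradSqR Q x := by
  set N : ℝ → ℝ := fun t => (∫ x : R3, gradSq (u t) x) + (∫ x : R3, V x * ‖u t x‖^2)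
    with hNdef
  set K : ℝ := ∫ x : R3, gradSqR Q x with hK
  have hne : ∀ t ∈ I, N t ≠ K := by
    intro t ht hEq
    have hE := henergy t ht
    rw [show ((∫ x : R3, gradSq (u t) x) + (∫ x : R3, V x * ‖u t x‖^2)) = N t from rfl,
      hEq] at hE
    have h4 : (∫ x : R3, ‖u t x‖^4) = ∫ x : R3, (Q x)^4 := by linarith
    have hm := hmass t ht
    exact hnever (u t) (hudiff t ht) (hu2 t ht) (hu4 t ht) (hugrad t ht) (huV t ht)
      (by rw [hm]; exact ne_of_gt hQ2pos)
      (by rw [h4, hm, show ((∫ x : R3, gradSq (u t) x) + (∫ x : R3, V x * ‖u t x‖^2)) = N t from rfl, hEq]; exact hC0)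
  intro t ht
  by_contra hge
  push_neg at hge
  have hgt : K < N t := lt_of_le_of_ne hge (fun h => hne t ht h.symm)
  have himg : IsPreconnected (N '' I) := hI.image N hN
  have hoc : Set.OrdConnected (N '' I) := himg.ordConnected
  have : K ∈ N '' I := hoc.out ⟨t₀, ht₀, rfl⟩ ⟨t, ht, rfl⟩ ⟨le_of_lt hstart, le_of_lt hgt⟩
  obtain ⟨s, hs, hsK⟩ := this
  exact hne s hs hsK
end
end

section
/- Suppose u = (1+α)Q(·−y) + h with α ∈ ℝ, |α| ≤ 1, h ∈ H¹(ℝ³;ℂ) satisfying the orthogonality ⟨∇Q(·−y), ∇h₁⟩ = 0. Define δ := ∫|∇Q|² - ∫(|∇u|² + V|u|²). Then δ = -2α∫|∇Q|² dx - α²∫|∇Q|² dx - ∫V|u|² dx - ∫|∇h|² dx. In particular, if additionally ‖h‖²_{H¹} + ∫V|u|² ≤ Cα², then δ = -2α∫|∇Q|² + O(α²), so |α| ∼ δ for |α| small and δ > 0. -/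
open MeasureTheory Real Filter
noncomputable section

/-- if `u = (1+α)Q(·−y) + h` with the orthogonality
`⟨∇Q(·−y), ∇h₁⟩ = 0`, then
`δ = -2α∫|∇Q|² - α²∫|∇Q|² - ∫V|u|² - ∫|∇h|²` where
`δ = ∫|∇Q|² - ∫(|∇u|² + V|u|²)`; and if in addition
`‖h‖²_{H¹} + ∫V|u|² ≤ Cα²`, then `δ = -2α∫|∇Q|² + O(α²)`. -/
theorem stmt13 (Q V : R3 → ℝ) (h : R3 → ℂ) (α : ℝ) (y : R3)
    (hα : |α| ≤ 1) (hVpos : ∀ x, 0 ≤ V x)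
    (hQdiff : Differentiable ℝ Q) (hhdiff : Differentiable ℝ h)
    (hQgrad : Integrable fun x => gradSqR Q x)
    (hh2 : Integrable fun x => ‖h x‖^2)
    (hhgrad : Integrable fun x => gradSq h x)
    (hcross : Integrable fun x =>
      ∑ j, pdR Q j (x - y) * fderiv ℝ (fun z => (h z).re) x (e3 j))
    (horth : (∫ x : R3,
      ∑ j, pdR Q j (x - y) * fderiv ℝ (fun z => (h z).re) x (e3 j)) = 0) :
    ∀ u : R3 → ℂ, (u = fun x => (((1 + α) * Q (x - y) : ℝ) : ℂ) + h x) →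
    (Integrable fun x => V x * ‖u x‖^2) →
    (Integrable fun x => gradSq u x) →
    ((∫ x : R3, gradSqR Q x) - ((∫ x : R3, gradSq u x) + (∫ x : R3, V x * ‖u x‖^2))
        = -2 * α * (∫ x : R3, gradSqR Q x) - α^2 * (∫ x : R3, gradSqR Q x)
          - (∫ x : R3, V x * ‖u x‖^2) - (∫ x : R3, gradSq h x))
    ∧ ∀ C : ℝ, 0 ≤ C →
        ((∫ x : R3, ‖h x‖^2) + (∫ x : R3, gradSq h x) + (∫ x : R3, V x * ‖u x‖^2)
          ≤ C * α^2) →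
        |((∫ x : R3, gradSqR Q x)
            - ((∫ x : R3, gradSq u x) + (∫ x : R3, V x * ‖u x‖^2)))
          + 2 * α * (∫ x : R3, gradSqR Q x)|
          ≤ (C + (∫ x : R3, gradSqR Q x)) * α^2 := by
  intro u hu hVint huint
  have hIQnn : 0 ≤ ∫ x : R3, gradSqR Q x :=
    integral_nonneg fun x => Finset.sum_nonneg fun i _ => sq_nonneg _
  -- pointwise decomposition of |∇u|²
  have hpt : ∀ x : R3, gradSq u x
      = (1+α)^2 * gradSqR Q (x - y)
        + 2*(1+α) * (∑ j, pdR Q j (x - y) * fderiv ℝ (fun z => (h z).re) x (e3 j))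
        + gradSq h x := by
    intro x
    have h1 : HasFDerivAt (fun x : R3 => Q (x - y)) (fderiv ℝ Q (x - y)) x := by
      have := ((hQdiff (x - y)).hasFDerivAt).comp x ((hasFDerivAt_id x).sub_const y)
      exact this
    have h2 : HasFDerivAt (fun x : R3 => (((1 + α) * Q (x - y) : ℝ) : ℂ))
        (Complex.ofRealCLM.comp ((1+α) • fderiv ℝ Q (x - y))) x :=
      Complex.ofRealCLM.hasFDerivAt.comp x (h1.const_mul (1+α))
    have h3 : HasFDerivAt u
        (Complex.ofRealCLM.comp ((1+α) • fderiv ℝ Q (x - y)) + fderiv ℝ h x) x := by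
      rw [hu]; exact h2.add (hhdiff x).hasFDerivAt
    have hpdu : ∀ i, pd u i x = (((1+α) * pdR Q i (x - y) : ℝ) : ℂ) + pd h i x := by
      intro i
      simp only [pd, pdR, h3.fderiv]
      simp
    have hre : ∀ i, (pd h i x).re = fderiv ℝ (fun z => (h z).re) x (e3 i) := by
      intro i
      have : HasFDerivAt (fun z : R3 => (h z).re)
          (Complex.reCLM.comp (fderiv ℝ h x)) x :=
        Complex.reCLM.hasFDerivAt.comp x (hhdiff x).hasFDerivAt
      simp [pd, this.fderiv]
    simp only [gradSq, gradSqR, Finset.mul_sum, ← Finset.sum_add_distrib]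
    refine Finset.sum_congr rfl fun i _ => ?_
    rw [hpdu i]
    have hn : ∀ z : ℂ, ‖z‖^2 = z.re^2 + z.im^2 := by
      intro z
      rw [Complex.sq_norm, Complex.normSq_apply]
      ring
    rw [hn, hn]
    simp only [Complex.add_re, Complex.add_im, Complex.ofReal_re, Complex.ofReal_im,
      hre i]
    ring
  -- integrability of pieces
  have hQgrady : Integrable (fun x : R3 => gradSqR Q (x - y)) := hQgrad.comp_sub_right y
  have hQy : (∫ x : R3, gradSqR Q (x - y)) = ∫ x : R3, gradSqR Q x :=
    integral_sub_right_eq_self (fun x => gradSqR Q x) y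
  have hintu : (∫ x : R3, gradSq u x)
      = (1+α)^2 * (∫ x : R3, gradSqR Q x) + (∫ x : R3, gradSq h x) := by
    calc (∫ x : R3, gradSq u x)
        = ∫ x : R3, ((1+α)^2 * gradSqR Q (x - y)
            + 2*(1+α) * (∑ j, pdR Q j (x - y) * fderiv ℝ (fun z => (h z).re) x (e3 j))
            + gradSq h x) := by exact integral_congr_ae (Filter.Eventually.of_forall hpt)
      _ = (1+α)^2 * (∫ x : R3, gradSqR Q (x - y))
            + 2*(1+α) * (∫ x : R3, ∑ j, pdR Q j (x - y) * fderiv ℝ (fun z => (h z).re) x (e3 j))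
            + (∫ x : R3, gradSq h x) := by
          have hA : Integrable (fun x : R3 => (1+α)^2 * gradSqR Q (x - y)) :=
            hQgrady.const_mul _
          have hB : Integrable (fun x : R3 =>
              2*(1+α) * ∑ j, pdR Q j (x - y) * fderiv ℝ (fun z => (h z).re) x (e3 j)) :=
            hcross.const_mul _
          have hAB : Integrable (fun x : R3 => (1+α)^2 * gradSqR Q (x - y)
              + 2*(1+α) * ∑ j, pdR Q j (x - y) * fderiv ℝ (fun z => (h z).re) x (e3 j)) :=
            hA.add hB
          rw [integral_add hAB hhgrad, integral_add hA hB,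
            integral_const_mul, integral_const_mul]
      _ = (1+α)^2 * (∫ x : R3, gradSqR Q x) + (∫ x : R3, gradSq h x) := by
          rw [hQy, horth]; ring
  have main : (∫ x : R3, gradSqR Q x) - ((∫ x : R3, gradSq u x) + (∫ x : R3, V x * ‖u x‖^2))
      = -2 * α * (∫ x : R3, gradSqR Q x) - α^2 * (∫ x : R3, gradSqR Q x)
        - (∫ x : R3, V x * ‖u x‖^2) - (∫ x : R3, gradSq h x) := by
    rw [hintu]; ring
  refine ⟨main, fun C hC hbd => ?_⟩
  have hVnn : 0 ≤ ∫ x : R3, V x * ‖u x‖^2 :=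
    integral_nonneg fun x => mul_nonneg (hVpos x) (sq_nonneg _)
  have hgnn : 0 ≤ ∫ x : R3, gradSq h x :=
    integral_nonneg fun x => Finset.sum_nonneg fun i _ => sq_nonneg _
  have hh2nn : 0 ≤ ∫ x : R3, ‖h x‖^2 := integral_nonneg fun x => sq_nonneg _
  have hkey : (∫ x : R3, gradSq h x) + (∫ x : R3, V x * ‖u x‖^2) ≤ C * α^2 := by
    linarith
  have habs : ((∫ x : R3, gradSqR Q x)
        - ((∫ x : R3, gradSq u x) + (∫ x : R3, V x * ‖u x‖^2)))
      + 2 * α * (∫ x : R3, gradSqR Q x)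
      = -(α^2 * (∫ x : R3, gradSqR Q x)
          + ((∫ x : R3, V x * ‖u x‖^2) + (∫ x : R3, gradSq h x))) := by
    rw [main]; ring
  rw [habs, abs_neg, abs_of_nonneg (add_nonneg (mul_nonneg (sq_nonneg α) hIQnn)
    (add_nonneg hVnn hgnn))]
  nlinarith [hkey]
end
end
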